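/- Let R be an algebra with local units over a commutative ring which is also a firm Frobenius algebra. Then every right R-comodule (M, ρ : M → M ⊗ R) becomes a firm right R-module via m·r := m₀ ε(m₁ r), and this gives an isomorphism between the category of right R-comodules and the category of firm right R-modules. -/

import Mathlib

open CategoryTheory TensorProduct

universe u

variable (k : Type u) [CommRing k]
variable (R : Type u) [NonUnitalRing R] [Module k R]
  [SMulCommClass k R R] [IsScalarTower k R R]

/-- The category of right `R`-comodules over the `k`-coalgebra `(R, Δ, ε)`. -/
structure ComodOver (Δ : R →ₗ[k] R ⊗[k] R) (ε : R →ₗ[k] k) where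
  carrier : Type u
  [acg : AddCommGroup carrier]
  [mod : Module k carrier]
  ρ : carrier →ₗ[k] carrier ⊗[k] R
  coassoc : ∀ m : carrier,
    (TensorProduct.assoc k carrier R R) ((ρ.rTensor R) (ρ m)) = (Δ.lTensor carrier) (ρ m)
  counit : ∀ m : carrier,
    (TensorProduct.rid k carrier) ((ε.lTensor carrier) (ρ m)) = m

attribute [instance] ComodOver.acg ComodOver.mod

instance (Δ : R →ₗ[k] R ⊗[k] R) (ε : R →ₗ[k] k) : Category (ComodOver k R Δ ε) where
  Hom X Y := {f : X.carrier →ₗ[k] Y.carrier // ∀ m : X.carrier,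
    Y.ρ (f m) = (f.rTensor R) (X.ρ m)}
  id X := ⟨LinearMap.id, by intro m; rw [LinearMap.rTensor_id]; rfl⟩
  comp {X Y Z} f g := ⟨g.val ∘ₗ f.val, by
    intro m
    rw [LinearMap.rTensor_comp]
    simp [f.property m, g.property (f.val m)]⟩
  id_comp f := Subtype.ext (LinearMap.ext fun _ => rfl)
  comp_id f := Subtype.ext (LinearMap.ext fun _ => rfl)
  assoc f g h := Subtype.ext (LinearMap.ext fun _ => rfl)

/-- The category of firm right modules over an algebra `R` with set of local units
`E`: non-unital modules such that every element is fixed by some local unit. -/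
structure FirmModOver (E : Set R) where
  carrier : Type u
  [acg : AddCommGroup carrier]
  [mod : Module k carrier]
  act : carrier ⊗[k] R →ₗ[k] carrier
  assoc : ∀ (m : carrier) (r s : R),
    act (act (m ⊗ₜ[k] r) ⊗ₜ[k] s) = act (m ⊗ₜ[k] (r * s))
  firm : ∀ m : carrier, ∃ e ∈ E, act (m ⊗ₜ[k] e) = m

attribute [instance] FirmModOver.acg FirmModOver.mod

instance (E : Set R) : Category (FirmModOver k R E) where
  Hom X Y := {f : X.carrier →ₗ[k] Y.carrier // ∀ (m : X.carrier) (r : R),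
    f (X.act (m ⊗ₜ[k] r)) = Y.act (f m ⊗ₜ[k] r)}
  id X := ⟨LinearMap.id, fun _ _ => rfl⟩
  comp {X Y Z} f g := ⟨g.val ∘ₗ f.val, by
    intro m r
    simp [f.property m r, g.property (f.val m) r]⟩
  id_comp f := Subtype.ext (LinearMap.ext fun _ => rfl)
  comp_id f := Subtype.ext (LinearMap.ext fun _ => rfl)
  assoc f g h := Subtype.ext (LinearMap.ext fun _ => rfl)

/-- The `R`-action `m ⊗ r ↦ m₀ ε(m₁ r)` induced on a comodule. -/
noncomputable def actOf (Δ : R →ₗ[k] R ⊗[k] R) (ε : R →ₗ[k] k)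
    (X : ComodOver k R Δ ε) : X.carrier ⊗[k] R →ₗ[k] X.carrier :=
  (TensorProduct.rid k X.carrier).toLinearMap ∘ₗ
    (ε.lTensor X.carrier) ∘ₗ
    ((LinearMap.mul' k R).lTensor X.carrier) ∘ₗ
    (TensorProduct.assoc k X.carrier R R).toLinearMap ∘ₗ
    (X.ρ.rTensor R)


section Aux
variable {k R}
variable {E : Set R} {Δ : R →ₗ[k] R ⊗[k] R} {ε : R →ₗ[k] k}
variable {M : Type u} [AddCommGroup M] [Module k M]
variable {M' : Type u} [AddCommGroup M'] [Module k M']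

/-- Contraction `m ⊗ s ↦ ε(s r) • m`. -/
noncomputable def ctr (ε : R →ₗ[k] k) (r : R) : M ⊗[k] R →ₗ[k] M :=
  (TensorProduct.rid k M).toLinearMap ∘ₗ ((ε ∘ₗ LinearMap.mulRight k r).lTensor M)

@[simp] lemma ctr_tmul (r : R) (m : M) (s : R) :
    ctr (M := M) ε r (m ⊗ₜ[k] s) = ε (s * r) • m := by
  simp [ctr]

lemma actOf_apply (X : ComodOver k R Δ ε) (m : X.carrier) (r : R) :
    actOf k R Δ ε X (m ⊗ₜ[k] r) = ctr ε r (X.ρ m) := by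
  have key : ∀ t : X.carrier ⊗[k] R,
      (TensorProduct.rid k X.carrier) ((ε.lTensor X.carrier)
        (((LinearMap.mul' k R).lTensor X.carrier)
          ((TensorProduct.assoc k X.carrier R R) (t ⊗ₜ[k] r)))) = ctr ε r t := by
    intro t
    induction t using TensorProduct.induction_on with
    | zero => simp
    | tmul m s => simp [LinearMap.mul'_apply]
    | add x y hx hy => simp only [add_tmul, map_add, hx, hy]
  simpa [actOf] using key (X.ρ m)

lemma ctr_delta (hcounit_r : ∀ r : R, (TensorProduct.rid k R) ((ε.lTensor R) (Δ r)) = r)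
    (hfrob_r : ∀ r s : R,
      Δ (r * s) = (TensorProduct.map LinearMap.id (LinearMap.mulRight k s)) (Δ r))
    (a r : R) : ctr (M := R) ε r (Δ a) = a * r := by
  have h1 : (LinearMap.mulRight k r).lTensor R (Δ a) = Δ (a * r) := (hfrob_r a r).symm
  have h2 : ctr (M := R) ε r (Δ a)
      = (TensorProduct.rid k R) ((ε.lTensor R) ((LinearMap.mulRight k r).lTensor R (Δ a))) := by
    simp [ctr, LinearMap.lTensor_comp]
  rw [h2, h1, hcounit_r]


set_option linter.unusedSectionVars false

lemma lt_ctr_assoc (t : M ⊗[k] R) (s r : R) :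
    (LinearMap.lTensor M (ctr (M := R) ε r))
      ((TensorProduct.assoc k M R R) (t ⊗ₜ[k] s)) = ε (s * r) • t := by
  induction t using TensorProduct.induction_on with
  | zero => simp
  | tmul m a => simp [smul_tmul']
  | add x y hx hy => simp only [add_tmul, map_add, hx, hy, smul_add]

lemma rho_act
    (hcounit_r : ∀ r : R, (TensorProduct.rid k R) ((ε.lTensor R) (Δ r)) = r)
    (hfrob_r : ∀ r s : R,
      Δ (r * s) = (TensorProduct.map LinearMap.id (LinearMap.mulRight k s)) (Δ r))
    (X : ComodOver k R Δ ε) (m : X.carrier) (r : R) :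
    X.ρ (actOf k R Δ ε X (m ⊗ₜ[k] r))
      = (LinearMap.mulRight k r).lTensor X.carrier (X.ρ m) := by
  obtain ⟨S, hS⟩ := TensorProduct.exists_finset (X.ρ m)
  have key := congrArg (LinearMap.lTensor X.carrier (ctr (M := R) ε r)) (X.coassoc m)
  rw [hS] at key
  simp only [map_sum, LinearMap.rTensor_tmul, lt_ctr_assoc, LinearMap.lTensor_tmul,
    ctr_delta hcounit_r hfrob_r] at key
  rw [actOf_apply, hS]
  simp only [map_sum, ctr_tmul, map_smul, LinearMap.lTensor_tmul,
    LinearMap.mulRight_apply]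
  exact key

lemma ctr_lt_mulRight (r s : R) (t : M ⊗[k] R) :
    ctr (M := M) ε s ((LinearMap.mulRight k r).lTensor M t) = ctr (M := M) ε (r * s) t := by
  induction t using TensorProduct.induction_on with
  | zero => simp
  | tmul m a => simp [mul_assoc]
  | add x y hx hy => simp only [map_add, hx, hy]

lemma act_assoc
    (hcounit_r : ∀ r : R, (TensorProduct.rid k R) ((ε.lTensor R) (Δ r)) = r)
    (hfrob_r : ∀ r s : R,
      Δ (r * s) = (TensorProduct.map LinearMap.id (LinearMap.mulRight k s)) (Δ r))
    (X : ComodOver k R Δ ε) (m : X.carrier) (r s : R) :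
    actOf k R Δ ε X ((actOf k R Δ ε X (m ⊗ₜ[k] r)) ⊗ₜ[k] s)
      = actOf k R Δ ε X (m ⊗ₜ[k] (r * s)) := by
  rw [actOf_apply, rho_act hcounit_r hfrob_r, ctr_lt_mulRight, ← actOf_apply]

lemma act_firm
    (hlocal : ∀ S : Finset R, ∃ e ∈ E, ∀ r ∈ S, e * r = r ∧ r * e = r)
    (X : ComodOver k R Δ ε) (m : X.carrier) :
    ∃ e ∈ E, actOf k R Δ ε X (m ⊗ₜ[k] e) = m := by
  classical
  obtain ⟨S, hS⟩ := TensorProduct.exists_finset (X.ρ m)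
  obtain ⟨e, heE, he⟩ := hlocal (S.image Prod.snd)
  refine ⟨e, heE, ?_⟩
  have hc := X.counit m
  rw [hS] at hc
  simp only [map_sum, LinearMap.lTensor_tmul, TensorProduct.rid_tmul] at hc
  rw [actOf_apply, hS, map_sum]
  rw [← hc]
  refine Finset.sum_congr rfl fun p hp => ?_
  rw [ctr_tmul, (he p.2 (Finset.mem_image_of_mem Prod.snd hp)).2]

/-- The candidate coaction attached to a local unit `e`: `m ↦ (m·e₍₁₎) ⊗ e₍₂₎`. -/
noncomputable def coact1 (Δ : R →ₗ[k] R ⊗[k] R) (N : FirmModOver k R E) (e : R) :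
    N.carrier →ₗ[k] N.carrier ⊗[k] R :=
  (N.act.rTensor R) ∘ₗ (TensorProduct.assoc k N.carrier R R).symm.toLinearMap ∘ₗ
    ((TensorProduct.mk k N.carrier (R ⊗[k] R)).flip (Δ e))

lemma coact1_eq {ι : Type*} (N : FirmModOver k R E) (e : R) (m : N.carrier)
    {T : Finset ι} {a b : ι → R} (hT : Δ e = ∑ p ∈ T, a p ⊗ₜ[k] b p) :
    coact1 Δ N e m = ∑ p ∈ T, (N.act (m ⊗ₜ[k] a p)) ⊗ₜ[k] b p := by
  simp [coact1, hT, tmul_sum, map_sum]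

lemma coact1_act
    (hfrob_l : ∀ r s : R,
      Δ (r * s) = (TensorProduct.map (LinearMap.mulLeft k r) LinearMap.id) (Δ s))
    (N : FirmModOver k R E) (m : N.carrier) (e f : R) :
    coact1 Δ N e (N.act (m ⊗ₜ[k] f)) = coact1 Δ N (f * e) m := by
  obtain ⟨T, hT⟩ := TensorProduct.exists_finset (Δ e)
  have h2 : Δ (f * e) = ∑ p ∈ T, (f * p.1) ⊗ₜ[k] p.2 := by
    rw [hfrob_l f e, hT]
    simp
  rw [coact1_eq N e _ hT, coact1_eq N (f * e) m h2]
  exact Finset.sum_congr rfl fun p _ => by rw [N.assoc]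

lemma coact1_welldef
    (hlocal : ∀ S : Finset R, ∃ e ∈ E, ∀ r ∈ S, e * r = r ∧ r * e = r)
    (hfrob_l : ∀ r s : R,
      Δ (r * s) = (TensorProduct.map (LinearMap.mulLeft k r) LinearMap.id) (Δ s))
    (N : FirmModOver k R E) (m : N.carrier) {e f : R}
    (hme : N.act (m ⊗ₜ[k] e) = m) (hmf : N.act (m ⊗ₜ[k] f) = m) :
    coact1 Δ N e m = coact1 Δ N f m := by
  classical
  obtain ⟨g, hgE, hg⟩ := hlocal {e, f}
  have h1 := hg e (by simp)
  have h2 := hg f (by simp)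
  calc coact1 Δ N e m = coact1 Δ N (e * g) m := by rw [h1.2]
    _ = coact1 Δ N g (N.act (m ⊗ₜ[k] e)) := (coact1_act hfrob_l N m g e).symm
    _ = coact1 Δ N g (N.act (m ⊗ₜ[k] f)) := by rw [hme, hmf]
    _ = coact1 Δ N (f * g) m := coact1_act hfrob_l N m g f
    _ = coact1 Δ N f m := by rw [h2.2]

/-- Every element is fixed by each local unit dominating one of its units. -/
lemma act_unit_absorb (N : FirmModOver k R E) {m : N.carrier} {a g : R}
    (ha : N.act (m ⊗ₜ[k] a) = m) (hag : a * g = a) : N.act (m ⊗ₜ[k] g) = m := by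
  conv_lhs => rw [← ha]
  rw [N.assoc, hag, ha]

/-- The coaction on a firm module. -/
noncomputable def coact
    (hlocal : ∀ S : Finset R, ∃ e ∈ E, ∀ r ∈ S, e * r = r ∧ r * e = r)
    (hfrob_l : ∀ r s : R,
      Δ (r * s) = (TensorProduct.map (LinearMap.mulLeft k r) LinearMap.id) (Δ s))
    (N : FirmModOver k R E) : N.carrier →ₗ[k] N.carrier ⊗[k] R where
  toFun m := coact1 Δ N (N.firm m).choose m
  map_add' m n := by
    classical
    obtain ⟨ha, hb⟩ := (N.firm m).choose_spec
    obtain ⟨ha', hb'⟩ := (N.firm n).choose_spec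
    obtain ⟨hc, hd⟩ := (N.firm (m + n)).choose_spec
    obtain ⟨g, hgE, hg⟩ := hlocal {(N.firm m).choose, (N.firm n).choose}
    have hmg : N.act (m ⊗ₜ[k] g) = m :=
      act_unit_absorb N hb (hg _ (by simp)).2
    have hng : N.act (n ⊗ₜ[k] g) = n :=
      act_unit_absorb N hb' (hg _ (by simp)).2
    have hmng : N.act ((m + n) ⊗ₜ[k] g) = m + n := by
      rw [add_tmul, map_add, hmg, hng]
    rw [coact1_welldef hlocal hfrob_l N (m + n) hd hmng,
      coact1_welldef hlocal hfrob_l N m hb hmg,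
      coact1_welldef hlocal hfrob_l N n hb' hng, map_add]
  map_smul' c m := by
    obtain ⟨ha, hb⟩ := (N.firm m).choose_spec
    obtain ⟨hc, hd⟩ := (N.firm (c • m)).choose_spec
    have hcm : N.act ((c • m) ⊗ₜ[k] (N.firm m).choose) = c • m := by
      rw [← smul_tmul', map_smul, hb]
    rw [RingHom.id_apply, coact1_welldef hlocal hfrob_l N (c • m) hd hcm, map_smul]

lemma coact_eq
    (hlocal : ∀ S : Finset R, ∃ e ∈ E, ∀ r ∈ S, e * r = r ∧ r * e = r)
    (hfrob_l : ∀ r s : R,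
      Δ (r * s) = (TensorProduct.map (LinearMap.mulLeft k r) LinearMap.id) (Δ s))
    (N : FirmModOver k R E) (m : N.carrier) {e : R}
    (hme : N.act (m ⊗ₜ[k] e) = m) :
    coact hlocal hfrob_l N m = coact1 Δ N e m := by
  show coact1 Δ N (N.firm m).choose m = _
  exact coact1_welldef hlocal hfrob_l N m (N.firm m).choose_spec.2 hme

lemma coact_counit
    (hlocal : ∀ S : Finset R, ∃ e ∈ E, ∀ r ∈ S, e * r = r ∧ r * e = r)
    (hfrob_l : ∀ r s : R,
      Δ (r * s) = (TensorProduct.map (LinearMap.mulLeft k r) LinearMap.id) (Δ s))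
    (hcounit_r : ∀ r : R, (TensorProduct.rid k R) ((ε.lTensor R) (Δ r)) = r)
    (N : FirmModOver k R E) (m : N.carrier) :
    (TensorProduct.rid k N.carrier)
      ((ε.lTensor N.carrier) (coact hlocal hfrob_l N m)) = m := by
  obtain ⟨e, heE, hme⟩ := N.firm m
  obtain ⟨T, hT⟩ := TensorProduct.exists_finset (Δ e)
  rw [coact_eq hlocal hfrob_l N m hme, coact1_eq N e m hT]
  have he : ∑ p ∈ T, ε p.2 • p.1 = e := by
    have := hcounit_r e
    rw [hT] at this
    simpa [map_sum] using this
  calc (TensorProduct.rid k N.carrier)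
        ((ε.lTensor N.carrier) (∑ p ∈ T, (N.act (m ⊗ₜ[k] p.1)) ⊗ₜ[k] p.2))
      = N.act (m ⊗ₜ[k] (∑ p ∈ T, ε p.2 • p.1)) := by
        simp only [map_sum, tmul_sum, tmul_smul, map_smul, LinearMap.lTensor_tmul,
          TensorProduct.rid_tmul]
    _ = m := by rw [he, hme]

lemma coact_coassoc
    (hlocal : ∀ S : Finset R, ∃ e ∈ E, ∀ r ∈ S, e * r = r ∧ r * e = r)
    (hfrob_l : ∀ r s : R,
      Δ (r * s) = (TensorProduct.map (LinearMap.mulLeft k r) LinearMap.id) (Δ s))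
    (hcoassoc : ∀ r : R,
      (TensorProduct.assoc k R R R) ((Δ.rTensor R) (Δ r)) = (Δ.lTensor R) (Δ r))
    (N : FirmModOver k R E) (m : N.carrier) :
    (TensorProduct.assoc k N.carrier R R)
      (((coact hlocal hfrob_l N).rTensor R) (coact hlocal hfrob_l N m))
      = (Δ.lTensor N.carrier) (coact hlocal hfrob_l N m) := by
  classical
  obtain ⟨e, heE, hme⟩ := N.firm m
  obtain ⟨T, hT⟩ := TensorProduct.exists_finset (Δ e)
  obtain ⟨g, hgE, hg⟩ := hlocal (T.image Prod.fst)
  -- the auxiliary map  a ↦ m · a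
  set am : R →ₗ[k] N.carrier := N.act ∘ₗ (TensorProduct.mk k N.carrier R m) with ham
  have key : ∀ (t : R ⊗[k] R) (b : R),
      (TensorProduct.assoc k N.carrier R R)
        (((N.act.rTensor R) ((TensorProduct.assoc k N.carrier R R).symm (m ⊗ₜ[k] t))) ⊗ₜ[k] b)
        = (am.rTensor (R ⊗[k] R)) ((TensorProduct.assoc k R R R) (t ⊗ₜ[k] b)) := by
    intro t b
    induction t using TensorProduct.induction_on with
    | zero => simp
    | tmul a c => simp [ham]
    | add x y hx hy => simp only [tmul_add, map_add, add_tmul, hx, hy]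
  have hrc : ∀ p ∈ T, coact hlocal hfrob_l N (N.act (m ⊗ₜ[k] p.1)) = coact1 Δ N p.1 m := by
    intro p hp
    have h1 := (hg p.1 (Finset.mem_image_of_mem Prod.fst hp)).2
    have hfix : N.act ((N.act (m ⊗ₜ[k] p.1)) ⊗ₜ[k] g) = N.act (m ⊗ₜ[k] p.1) := by
      rw [N.assoc, h1]
    rw [coact_eq hlocal hfrob_l N _ hfix, coact1_act hfrob_l, h1]
  rw [coact_eq hlocal hfrob_l N m hme, coact1_eq N e m hT]
  rw [map_sum, map_sum, map_sum]
  have hL : ∀ p ∈ T,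
      (TensorProduct.assoc k N.carrier R R)
        (((coact hlocal hfrob_l N).rTensor R) ((N.act (m ⊗ₜ[k] p.1)) ⊗ₜ[k] p.2))
        = (am.rTensor (R ⊗[k] R)) ((TensorProduct.assoc k R R R) ((Δ p.1) ⊗ₜ[k] p.2)) := by
    intro p hp
    rw [LinearMap.rTensor_tmul, hrc p hp]
    exact key (Δ p.1) p.2
  rw [Finset.sum_congr rfl hL]
  have hR : ∀ p ∈ T,
      (Δ.lTensor N.carrier) ((N.act (m ⊗ₜ[k] p.1)) ⊗ₜ[k] p.2)
        = (am.rTensor (R ⊗[k] R)) ((Δ.lTensor R) (p.1 ⊗ₜ[k] p.2)) := by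
    intro p hp
    simp [ham]
  rw [Finset.sum_congr rfl hR]
  have hass : (∑ p ∈ T, (TensorProduct.assoc k R R R) ((Δ p.1) ⊗ₜ[k] p.2))
      = (TensorProduct.assoc k R R R) ((Δ.rTensor R) (Δ e)) := by
    rw [hT, map_sum, map_sum]
    simp
  calc ∑ p ∈ T, (LinearMap.rTensor (R ⊗[k] R) am)
        ((TensorProduct.assoc k R R R) ((Δ p.1) ⊗ₜ[k] p.2))
      = (LinearMap.rTensor (R ⊗[k] R) am)
          (∑ p ∈ T, (TensorProduct.assoc k R R R) ((Δ p.1) ⊗ₜ[k] p.2)) :=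
        (map_sum _ _ _).symm
    _ = (LinearMap.rTensor (R ⊗[k] R) am) ((Δ.lTensor R) (Δ e)) := by rw [hass, hcoassoc]
    _ = ∑ p ∈ T, (LinearMap.rTensor (R ⊗[k] R) am) ((Δ.lTensor R) (p.1 ⊗ₜ[k] p.2)) := by
        rw [hT, map_sum, map_sum]

lemma ctr_rTensor (f : M →ₗ[k] M') (r : R) (t : M ⊗[k] R) :
    ctr (M := M') ε r (f.rTensor R t) = f (ctr (M := M) ε r t) := by
  induction t using TensorProduct.induction_on with
  | zero => simp
  | tmul m a => simp
  | add x y hx hy => simp only [map_add, hx, hy]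

lemma act_fix (X : ComodOver k R Δ ε) (m : X.carrier) {S : Finset (X.carrier × R)}
    (hS : X.ρ m = ∑ p ∈ S, p.1 ⊗ₜ[k] p.2) {e : R}
    (he : ∀ p ∈ S, p.2 * e = p.2) :
    actOf k R Δ ε X (m ⊗ₜ[k] e) = m := by
  have hc := X.counit m
  rw [hS] at hc
  simp only [map_sum, LinearMap.lTensor_tmul, TensorProduct.rid_tmul] at hc
  rw [actOf_apply, hS, map_sum, ← hc]
  exact Finset.sum_congr rfl fun p hp => by rw [ctr_tmul, he p hp]

lemma coact_map
    (hlocal : ∀ S : Finset R, ∃ e ∈ E, ∀ r ∈ S, e * r = r ∧ r * e = r)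
    (hfrob_l : ∀ r s : R,
      Δ (r * s) = (TensorProduct.map (LinearMap.mulLeft k r) LinearMap.id) (Δ s))
    (N P : FirmModOver k R E) (f : N ⟶ P) (m : N.carrier) :
    coact hlocal hfrob_l P (f.val m) = (f.val.rTensor R) (coact hlocal hfrob_l N m) := by
  obtain ⟨e, heE, hme⟩ := N.firm m
  have hfe : P.act (f.val m ⊗ₜ[k] e) = f.val m := by
    rw [← f.property m e, hme]
  obtain ⟨T, hT⟩ := TensorProduct.exists_finset (Δ e)
  rw [coact_eq hlocal hfrob_l P _ hfe, coact_eq hlocal hfrob_l N m hme,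
    coact1_eq P e _ hT, coact1_eq N e m hT, map_sum]
  exact Finset.sum_congr rfl fun p _ => by
    rw [LinearMap.rTensor_tmul, f.property m p.1]

theorem comod_ext {X Y : ComodOver k R Δ ε} (h : X.carrier = Y.carrier)
    (hi : HEq X.acg Y.acg) (hm : HEq X.mod Y.mod) (hρ : HEq X.ρ Y.ρ) : X = Y := by
  cases X; cases Y
  cases h; cases hi; cases hm; cases hρ
  rfl

theorem firmmod_ext {X Y : FirmModOver k R E} (h : X.carrier = Y.carrier)
    (hi : HEq X.acg Y.acg) (hm : HEq X.mod Y.mod) (ha : HEq X.act Y.act) : X = Y := by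
  cases X; cases Y
  cases h; cases hi; cases hm; cases ha
  rfl

theorem comod_hom_heq {A B A' B' : ComodOver k R Δ ε} (hA : A = A') (hB : B = B')
    (f : A ⟶ B) (g : A' ⟶ B') (h : HEq f.val g.val) : HEq f g := by
  subst hA; subst hB
  exact heq_of_eq (Subtype.ext (eq_of_heq h))

theorem firmmod_hom_heq {A B A' B' : FirmModOver k R E} (hA : A = A') (hB : B = B')
    (f : A ⟶ B) (g : A' ⟶ B') (h : HEq f.val g.val) : HEq f g := by
  subst hA; subst hB
  exact heq_of_eq (Subtype.ext (eq_of_heq h))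

/-- The functor from comodules to firm modules. -/
noncomputable def Kfun
    (hcounit_r : ∀ r : R, (TensorProduct.rid k R) ((ε.lTensor R) (Δ r)) = r)
    (hfrob_r : ∀ r s : R,
      Δ (r * s) = (TensorProduct.map LinearMap.id (LinearMap.mulRight k s)) (Δ r))
    (hlocal : ∀ S : Finset R, ∃ e ∈ E, ∀ r ∈ S, e * r = r ∧ r * e = r) :
    ComodOver k R Δ ε ⥤ FirmModOver k R E where
  obj X :=
    { carrier := X.carrier
      act := actOf k R Δ ε X
      assoc := act_assoc hcounit_r hfrob_r X
      firm := act_firm hlocal X }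
  map {X Y} f := ⟨f.val, fun m r => by
    show f.val (actOf k R Δ ε X (m ⊗ₜ[k] r)) = actOf k R Δ ε Y (f.val m ⊗ₜ[k] r)
    rw [actOf_apply, actOf_apply, f.property m, ctr_rTensor]⟩
  map_id X := rfl
  map_comp f g := rfl

/-- The functor from firm modules to comodules. -/
noncomputable def Lfun
    (hlocal : ∀ S : Finset R, ∃ e ∈ E, ∀ r ∈ S, e * r = r ∧ r * e = r)
    (hfrob_l : ∀ r s : R,
      Δ (r * s) = (TensorProduct.map (LinearMap.mulLeft k r) LinearMap.id) (Δ s))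
    (hcoassoc : ∀ r : R,
      (TensorProduct.assoc k R R R) ((Δ.rTensor R) (Δ r)) = (Δ.lTensor R) (Δ r))
    (hcounit_r : ∀ r : R, (TensorProduct.rid k R) ((ε.lTensor R) (Δ r)) = r) :
    FirmModOver k R E ⥤ ComodOver k R Δ ε where
  obj N :=
    { carrier := N.carrier
      ρ := coact hlocal hfrob_l N
      coassoc := coact_coassoc hlocal hfrob_l hcoassoc N
      counit := coact_counit hlocal hfrob_l hcounit_r N }
  map {N P} f := ⟨f.val, fun m => coact_map hlocal hfrob_l N P f m⟩
  map_id N := rfl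
  map_comp f g := rfl


lemma KL_rho
    (hlocal : ∀ S : Finset R, ∃ e ∈ E, ∀ r ∈ S, e * r = r ∧ r * e = r)
    (hcoassoc : ∀ r : R,
      (TensorProduct.assoc k R R R) ((Δ.rTensor R) (Δ r)) = (Δ.lTensor R) (Δ r))
    (hcounit_l : ∀ r : R, (TensorProduct.lid k R) ((ε.rTensor R) (Δ r)) = r)
    (hcounit_r : ∀ r : R, (TensorProduct.rid k R) ((ε.lTensor R) (Δ r)) = r)
    (hfrob_l : ∀ r s : R,
      Δ (r * s) = (TensorProduct.map (LinearMap.mulLeft k r) LinearMap.id) (Δ s))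
    (hfrob_r : ∀ r s : R,
      Δ (r * s) = (TensorProduct.map LinearMap.id (LinearMap.mulRight k s)) (Δ r))
    (X : ComodOver k R Δ ε) :
    coact hlocal hfrob_l ((Kfun hcounit_r hfrob_r hlocal).obj X) = X.ρ := by
  classical
  apply LinearMap.ext; intro m
  obtain ⟨S, hS⟩ := TensorProduct.exists_finset (X.ρ m)
  obtain ⟨e, heE, he⟩ := hlocal (S.image Prod.snd)
  have he' : ∀ p ∈ S, p.2 * e = p.2 := fun p hp =>
    (he p.2 (Finset.mem_image_of_mem Prod.snd hp)).2
  have hme : ((Kfun hcounit_r hfrob_r hlocal).obj X).act (m ⊗ₜ[k] e) = m :=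
    act_fix X m hS he'
  obtain ⟨T, hT⟩ := TensorProduct.exists_finset (Δ e)
  have inner : ∀ s : R, s * e = s → ∑ q ∈ T, ε (s * q.1) • q.2 = s := by
    intro s hs
    have h1 : Δ (s * e) = ∑ q ∈ T, (s * q.1) ⊗ₜ[k] q.2 := by
      rw [hfrob_l s e, hT]; simp
    have h2 := hcounit_l (s * e)
    rw [h1] at h2
    simpa [map_sum, hs] using h2
  rw [coact_eq hlocal hfrob_l _ m hme,
    coact1_eq ((Kfun hcounit_r hfrob_r hlocal).obj X) e m hT]
  have hact : ∀ q : R, ((Kfun hcounit_r hfrob_r hlocal).obj X).act (m ⊗ₜ[k] q)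
      = ∑ p ∈ S, ε (p.2 * q) • p.1 := by
    intro q
    show actOf k R Δ ε X (m ⊗ₜ[k] q) = _
    erw [actOf_apply, hS, map_sum]
    simp
  calc (∑ q ∈ T, (((Kfun hcounit_r hfrob_r hlocal).obj X).act (m ⊗ₜ[k] q.1)) ⊗ₜ[k] q.2 : X.carrier ⊗[k] R)
      = ∑ q ∈ T, ∑ p ∈ S, ε (p.2 * q.1) • (p.1 ⊗ₜ[k] q.2) := by
        refine Finset.sum_congr rfl fun q _ => ?_
        rw [hact q.1, sum_tmul]
        exact Finset.sum_congr rfl fun p _ => by rw [smul_tmul']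
    _ = ∑ p ∈ S, p.1 ⊗ₜ[k] (∑ q ∈ T, ε (p.2 * q.1) • q.2) := by
        rw [Finset.sum_comm]
        refine Finset.sum_congr rfl fun p _ => ?_
        rw [tmul_sum]
        exact Finset.sum_congr rfl fun q _ => (tmul_smul _ _ _).symm
    _ = ∑ p ∈ S, p.1 ⊗ₜ[k] p.2 := by
        refine Finset.sum_congr rfl fun p hp => ?_
        rw [inner p.2 (he' p hp)]
    _ = X.ρ m := hS.symm

lemma LK_act
    (hlocal : ∀ S : Finset R, ∃ e ∈ E, ∀ r ∈ S, e * r = r ∧ r * e = r)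
    (hcoassoc : ∀ r : R,
      (TensorProduct.assoc k R R R) ((Δ.rTensor R) (Δ r)) = (Δ.lTensor R) (Δ r))
    (hcounit_r : ∀ r : R, (TensorProduct.rid k R) ((ε.lTensor R) (Δ r)) = r)
    (hfrob_l : ∀ r s : R,
      Δ (r * s) = (TensorProduct.map (LinearMap.mulLeft k r) LinearMap.id) (Δ s))
    (hfrob_r : ∀ r s : R,
      Δ (r * s) = (TensorProduct.map LinearMap.id (LinearMap.mulRight k s)) (Δ r))
    (N : FirmModOver k R E) :
    actOf k R Δ ε ((Lfun hlocal hfrob_l hcoassoc hcounit_r).obj N) = N.act := by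
  apply TensorProduct.ext'
  intro m r
  obtain ⟨e, heE, hme⟩ := N.firm m
  obtain ⟨T, hT⟩ := TensorProduct.exists_finset (Δ e)
  rw [actOf_apply]
  show ctr ε r (coact hlocal hfrob_l N m) = N.act (m ⊗ₜ[k] r)
  rw [coact_eq hlocal hfrob_l N m hme, coact1_eq N e m hT, map_sum]
  have hce : ∑ q ∈ T, ε (q.2 * r) • q.1 = e * r := by
    have := ctr_delta hcounit_r hfrob_r e r
    rw [hT, map_sum] at this
    simpa using this
  calc ∑ q ∈ T, ctr ε r ((N.act (m ⊗ₜ[k] q.1)) ⊗ₜ[k] q.2)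
      = ∑ q ∈ T, N.act (m ⊗ₜ[k] (ε (q.2 * r) • q.1)) := by
        refine Finset.sum_congr rfl fun q _ => ?_
        erw [ctr_tmul, tmul_smul, map_smul]
    _ = N.act (m ⊗ₜ[k] (∑ q ∈ T, ε (q.2 * r) • q.1)) := by
        erw [tmul_sum, map_sum]
    _ = N.act (m ⊗ₜ[k] (e * r)) := by rw [hce]
    _ = N.act (m ⊗ₜ[k] r) := by erw [← N.assoc, hme]


lemma KL_id
    (hlocal : ∀ S : Finset R, ∃ e ∈ E, ∀ r ∈ S, e * r = r ∧ r * e = r)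
    (hcoassoc : ∀ r : R,
      (TensorProduct.assoc k R R R) ((Δ.rTensor R) (Δ r)) = (Δ.lTensor R) (Δ r))
    (hcounit_l : ∀ r : R, (TensorProduct.lid k R) ((ε.rTensor R) (Δ r)) = r)
    (hcounit_r : ∀ r : R, (TensorProduct.rid k R) ((ε.lTensor R) (Δ r)) = r)
    (hfrob_l : ∀ r s : R,
      Δ (r * s) = (TensorProduct.map (LinearMap.mulLeft k r) LinearMap.id) (Δ s))
    (hfrob_r : ∀ r s : R,
      Δ (r * s) = (TensorProduct.map LinearMap.id (LinearMap.mulRight k s)) (Δ r)) :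
    Kfun hcounit_r hfrob_r hlocal ⋙ Lfun hlocal hfrob_l hcoassoc hcounit_r
      = 𝟭 (ComodOver k R Δ ε) := by
  have hobj : ∀ X : ComodOver k R Δ ε,
      (Kfun hcounit_r hfrob_r hlocal ⋙ Lfun hlocal hfrob_l hcoassoc hcounit_r).obj X = X :=
    fun X => comod_ext rfl HEq.rfl HEq.rfl
      (heq_of_eq (KL_rho hlocal hcoassoc hcounit_l hcounit_r hfrob_l hfrob_r X))
  apply Functor.hext hobj
  intro X Y f
  exact comod_hom_heq (hobj X) (hobj Y) _ _ HEq.rfl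

lemma LK_id
    (hlocal : ∀ S : Finset R, ∃ e ∈ E, ∀ r ∈ S, e * r = r ∧ r * e = r)
    (hcoassoc : ∀ r : R,
      (TensorProduct.assoc k R R R) ((Δ.rTensor R) (Δ r)) = (Δ.lTensor R) (Δ r))
    (hcounit_r : ∀ r : R, (TensorProduct.rid k R) ((ε.lTensor R) (Δ r)) = r)
    (hfrob_l : ∀ r s : R,
      Δ (r * s) = (TensorProduct.map (LinearMap.mulLeft k r) LinearMap.id) (Δ s))
    (hfrob_r : ∀ r s : R,
      Δ (r * s) = (TensorProduct.map LinearMap.id (LinearMap.mulRight k s)) (Δ r)) :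
    Lfun hlocal hfrob_l hcoassoc hcounit_r ⋙ Kfun hcounit_r hfrob_r hlocal
      = 𝟭 (FirmModOver k R E) := by
  have hobj : ∀ N : FirmModOver k R E,
      (Lfun hlocal hfrob_l hcoassoc hcounit_r ⋙ Kfun hcounit_r hfrob_r hlocal).obj N = N :=
    fun N => firmmod_ext rfl HEq.rfl HEq.rfl
      (heq_of_eq (LK_act hlocal hcoassoc hcounit_r hfrob_l hfrob_r N))
  apply Functor.hext hobj
  intro X Y f
  exact firmmod_hom_heq (hobj X) (hobj Y) _ _ HEq.rfl

end Aux

theorem stmt15 (E : Set R)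
    (hidem : ∀ e ∈ E, e * e = e)
    (hlocal : ∀ S : Finset R, ∃ e ∈ E, ∀ r ∈ S, e * r = r ∧ r * e = r)
    (Δ : R →ₗ[k] R ⊗[k] R) (ε : R →ₗ[k] k)
    (hcoassoc : ∀ r : R,
      (TensorProduct.assoc k R R R) ((Δ.rTensor R) (Δ r)) = (Δ.lTensor R) (Δ r))
    (hcounit_l : ∀ r : R, (TensorProduct.lid k R) ((ε.rTensor R) (Δ r)) = r)
    (hcounit_r : ∀ r : R, (TensorProduct.rid k R) ((ε.lTensor R) (Δ r)) = r)
    (hfrob_l : ∀ r s : R,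
      Δ (r * s) = (TensorProduct.map (LinearMap.mulLeft k r) LinearMap.id) (Δ s))
    (hfrob_r : ∀ r s : R,
      Δ (r * s) = (TensorProduct.map LinearMap.id (LinearMap.mulRight k s)) (Δ r)) :
    (∀ X : ComodOver k R Δ ε,
      (∀ (m : X.carrier) (r s : R),
        actOf k R Δ ε X ((actOf k R Δ ε X (m ⊗ₜ[k] r)) ⊗ₜ[k] s) =
          actOf k R Δ ε X (m ⊗ₜ[k] (r * s))) ∧
      (∀ m : X.carrier, ∃ e ∈ E, actOf k R Δ ε X (m ⊗ₜ[k] e) = m)) ∧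
    ∃ (K : ComodOver k R Δ ε ⥤ FirmModOver k R E)
      (L : FirmModOver k R E ⥤ ComodOver k R Δ ε),
      (∀ X : ComodOver k R Δ ε, (K.obj X).carrier = X.carrier) ∧
      (∀ X : ComodOver k R Δ ε, HEq (K.obj X).act (actOf k R Δ ε X)) ∧
      (∀ (X Y : ComodOver k R Δ ε) (f : X ⟶ Y), HEq (K.map f).val f.val) ∧
      K ⋙ L = 𝟭 (ComodOver k R Δ ε) ∧
      L ⋙ K = 𝟭 (FirmModOver k R E) := by
  refine ⟨fun X => ⟨act_assoc hcounit_r hfrob_r X, act_firm hlocal X⟩,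
    Kfun hcounit_r hfrob_r hlocal, Lfun hlocal hfrob_l hcoassoc hcounit_r,
    fun X => rfl, fun X => HEq.rfl, fun X Y f => HEq.rfl,
    KL_id hlocal hcoassoc hcounit_l hcounit_r hfrob_l hfrob_r,
    LK_id hlocal hcoassoc hcounit_r hfrob_l hfrob_r⟩
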